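/- Every nonempty Polish space that is zero-dimensional, has no isolated points, and has no nonempty compact open subsets is homeomorphic to the Baire space ℕ^ℕ. -/

import Mathlib

open Set Metric Topology

lemma partition_lemma {X : Type*} [MetricSpace X] [CompleteSpace X]
    [SecondCountableTopology X]
    (hzero : TopologicalSpace.IsTopologicalBasis {s : Set X | IsClopen s})
    (hnck : ∀ U : Set X, IsOpen U → IsCompact U → U = ∅)
    (U : Set X) (hU : IsClopen U) (hne : U.Nonempty) (ε : ℝ) (hε : 0 < ε) :
    ∃ e : ℕ → Set X, (∀ n, IsClopen (e n)) ∧ (∀ n, (e n).Nonempty) ∧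
      (∀ n, EMetric.diam (e n) ≤ ENNReal.ofReal ε) ∧
      Pairwise (Function.onFun Disjoint e) ∧ (⋃ n, e n) = U := by
  -- U is not compact
  have hUnc : ¬ IsCompact U := fun hc => hne.ne_empty (hnck U hU.isOpen hc)
  -- U is not totally bounded
  have hUtb : ¬ TotallyBounded U := by
    intro htb
    exact hUnc (isCompact_iff_totallyBounded_isComplete.2 ⟨htb, hU.isClosed.isComplete⟩)
  rw [totallyBounded_iff] at hUtb
  push_neg at hUtb
  obtain ⟨ε0, hε0, hε0'⟩ := hUtb
  set δ : ℝ := min ε ε0 / 3 with hδdef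
  have hδ : 0 < δ := by positivity
  -- clopen neighborhoods inside small balls
  have hV : ∀ x : X, x ∈ U → ∃ V : Set X, IsClopen V ∧ x ∈ V ∧ V ⊆ U ∩ ball x δ := by
    intro x hx
    obtain ⟨V, hV1, hV2, hV3⟩ := hzero.exists_subset_of_mem_open
      (show x ∈ U ∩ ball x δ from ⟨hx, mem_ball_self hδ⟩)
      (hU.isOpen.inter isOpen_ball)
    exact ⟨V, hV1, hV2, hV3⟩
  choose! V hVc hVx hVs using hV
  -- countable subcover
  have hcover : ⋃ x : U, V x = U := by
    apply Subset.antisymm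
    · exact iUnion_subset fun x => ((hVs x x.2).trans inter_subset_left)
    · intro x hx; exact mem_iUnion.2 ⟨⟨x, hx⟩, hVx x hx⟩
  obtain ⟨T, hTc, hTU⟩ := TopologicalSpace.isOpen_iUnion_countable (fun x : U => V x)
    (fun x => (hVc x x.2).isOpen)
  rw [hcover] at hTU
  have hTne : T.Nonempty := by
    rcases hne with ⟨y, hy⟩
    rw [← hTU] at hy
    rcases mem_iUnion₂.1 hy with ⟨i, hi, _⟩
    exact ⟨i, hi⟩
  obtain ⟨f, hf⟩ := hTc.exists_eq_range hTne
  -- W and its disjointification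
  set W : ℕ → Set X := fun n => V (f n) with hWdef
  have hWU : ⋃ n, W n = U := by
    rw [← hTU, hf]
    ext y; simp only [mem_iUnion, mem_iUnion₂]
    constructor
    · rintro ⟨n, hn⟩; exact ⟨f n, ⟨n, rfl⟩, hn⟩
    · rintro ⟨i, ⟨n, rfl⟩, hn⟩; exact ⟨n, hn⟩
  have hWc : ∀ n, IsClopen (W n) := fun n => hVc (f n) (f n).2
  have hWball : ∀ n, W n ⊆ ball ((f n : X)) δ := fun n =>
    (hVs (f n) (f n).2).trans inter_subset_right
  set D : ℕ → Set X := disjointed W with hDdef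
  have hDc : ∀ n, IsClopen (D n) := by
    have hps : ∀ n, IsClopen (partialSups W n) := by
      intro n
      induction n with
      | zero => simpa using hWc 0
      | succ n ih => rw [partialSups_add_one]; exact ih.union (hWc (n + 1))
    intro n
    cases n with
    | zero => simpa [hDdef, disjointed_zero] using hWc 0
    | succ n =>
      rw [hDdef, disjointed_add_one]
      exact (hWc (n + 1)).diff (hps n)
  have hDsub : ∀ n, D n ⊆ W n := fun n => disjointed_le W n
  have hDU : ⋃ n, D n = U := by rw [hDdef, iUnion_disjointed, hWU]
  have hDdisj : Pairwise (Function.onFun Disjoint D) := disjoint_disjointed W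
  -- small diameter
  have hDdiam : ∀ n, EMetric.diam (D n) ≤ ENNReal.ofReal ε := by
    intro n
    refine EMetric.diam_le ?_
    intro x hx y hy
    have hx' := hWball n (hDsub n hx)
    have hy' := hWball n (hDsub n hy)
    rw [mem_ball] at hx' hy'
    rw [edist_dist]
    apply ENNReal.ofReal_le_ofReal
    have htri := dist_triangle x ((f n : X)) y
    rw [dist_comm] at hy'
    have hδε : δ ≤ ε / 3 := by
      rw [hδdef]; apply div_le_div_of_nonneg_right _ (by norm_num)
      exact min_le_left _ _
    linarith
  -- infinitely many nonempty pieces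
  have hSinf : {n | (D n).Nonempty}.Infinite := by
    intro hfin
    set c : Set X := (fun n => (id : X → X) n) '' ∅ with hcdef
    obtain ⟨pt, hpt⟩ : ∃ pt : ℕ → X, ∀ n ∈ {n | (D n).Nonempty}, pt n ∈ D n := by
      classical
      refine ⟨fun n => if h : (D n).Nonempty then h.choose else hne.choose, ?_⟩
      intro n hn
      change (if h : (D n).Nonempty then Exists.choose h else Exists.choose hne) ∈ D n
      have h' : (D n).Nonempty := hn
      rw [dif_pos h']
      exact h'.choose_spec
    refine hε0' (pt '' {n | (D n).Nonempty}) (hfin.image pt) ?_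
    intro x hx
    rw [← hDU] at hx
    rcases mem_iUnion.1 hx with ⟨n, hn⟩
    have hnS : n ∈ {n | (D n).Nonempty} := ⟨x, hn⟩
    refine mem_biUnion (mem_image_of_mem pt hnS) ?_
    have h1 : x ∈ ball ((f n : X)) δ := hWball n (hDsub n hn)
    have h2 : pt n ∈ ball ((f n : X)) δ := hWball n (hDsub n (hpt n hnS))
    have := dist_triangle x ((f n : X)) (pt n)
    rw [mem_ball] at h1 h2 ⊢
    rw [dist_comm] at h2
    have hδε0 : δ ≤ ε0 / 3 := by
      rw [hδdef]
      apply div_le_div_of_nonneg_right _ (by norm_num)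
      exact min_le_right _ _
    linarith
  -- reindex the nonempty pieces by ℕ
  haveI : Infinite ({n | (D n).Nonempty} : Set ℕ) := hSinf.to_subtype
  letI : Encodable ({n | (D n).Nonempty} : Set ℕ) :=
    ((Set.to_countable _).mono (subset_univ _)).toEncodable
  letI : Denumerable ({n | (D n).Nonempty} : Set ℕ) := Denumerable.ofEncodableOfInfinite _
  set q : ℕ ≃ ({n | (D n).Nonempty} : Set ℕ) := (Denumerable.eqv _).symm with hqdef
  refine ⟨fun n => D (q n), fun n => hDc _, fun n => (q n).2, fun n => hDdiam _, ?_, ?_⟩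
  · intro m n hmn
    exact hDdisj (fun h => hmn (q.injective (Subtype.coe_injective h)))
  · apply Subset.antisymm
    · rw [← hDU]
      exact iUnion_subset fun n => subset_iUnion D ((q n : ℕ))
    · intro x hx
      rw [← hDU] at hx
      rcases mem_iUnion.1 hx with ⟨n, hn⟩
      exact mem_iUnion.2 ⟨q.symm ⟨n, ⟨x, hn⟩⟩, by rw [Equiv.apply_symm_apply]; exact hn⟩

namespace AUproof

variable {X : Type*}

/-- Scheme of sets together with a "scale" parameter. -/
noncomputable def scheme (e : Set X → ℝ → ℕ → Set X) : List ℕ → Set X × ℝ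
  | [] => (Set.univ, 1)
  | a :: l => ((e (scheme e l).1 ((scheme e l).2 / 2) a), (scheme e l).2 / 2)

/-- The sets of the scheme. -/
noncomputable def A (e : Set X → ℝ → ℕ → Set X) (l : List ℕ) : Set X := (scheme e l).1

/-- The branch through the scheme chosen by a point. -/
noncomputable def branch (nxt : X → List ℕ → ℕ) (y : X) : ℕ → List ℕ
  | 0 => []
  | k + 1 => nxt y (branch nxt y k) :: branch nxt y k

theorem key {X : Type*} [MetricSpace X] [CompleteSpace X] [SecondCountableTopology X] [Nonempty X]
    (hzero : TopologicalSpace.IsTopologicalBasis {s : Set X | IsClopen s})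
    (hnck : ∀ U : Set X, IsOpen U → IsCompact U → U = ∅) :
    Nonempty (X ≃ₜ (ℕ → ℕ)) := by
  classical
  obtain ⟨e, he⟩ : ∃ e : Set X → ℝ → ℕ → Set X, ∀ (U : Set X), IsClopen U → U.Nonempty →
      ∀ ε : ℝ, 0 < ε → (∀ n, IsClopen (e U ε n)) ∧ (∀ n, (e U ε n).Nonempty) ∧
      (∀ n, EMetric.diam (e U ε n) ≤ ENNReal.ofReal ε) ∧
      Pairwise (Function.onFun Disjoint (e U ε)) ∧ (⋃ n, e U ε n) = U := by
    choose! e h1 h2 h3 h4 h5 using partition_lemma hzero hnck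
    exact ⟨e, fun U hU hne ε hε => ⟨h1 U hU hne ε hε, h2 U hU hne ε hε, h3 U hU hne ε hε,
      h4 U hU hne ε hε, h5 U hU hne ε hε⟩⟩
  -- basic properties of the scheme
  have hApos : ∀ l : List ℕ, 0 < (scheme e l).2 := by
    intro l
    induction l with
    | nil => norm_num [scheme]
    | cons a l ih => simpa [scheme] using by positivity
  have hinv : ∀ l : List ℕ, IsClopen (A e l) ∧ (A e l).Nonempty := by
    intro l
    induction l with
    | nil => exact ⟨isClopen_univ, Set.univ_nonempty⟩
    | cons a l ih =>
      have := he (A e l) ih.1 ih.2 ((scheme e l).2 / 2) (by have := hApos l; positivity)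
      exact ⟨this.1 a, this.2.1 a⟩
  have hspec : ∀ l : List ℕ,
      (∀ n, EMetric.diam (A e (n :: l)) ≤ ENNReal.ofReal ((scheme e l).2 / 2)) ∧
      Pairwise (Function.onFun Disjoint (fun a => A e (a :: l))) ∧
      (⋃ a, A e (a :: l)) = A e l := by
    intro l
    have := he (A e l) (hinv l).1 (hinv l).2 ((scheme e l).2 / 2) (by have := hApos l; positivity)
    exact ⟨this.2.2.1, this.2.2.2.1, this.2.2.2.2⟩
  have hanti : CantorScheme.Antitone (A e) := by
    intro l a
    rw [← (hspec l).2.2]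
    exact Set.subset_iUnion (fun a => A e (a :: l)) a
  have hdisj : CantorScheme.Disjoint (A e) := fun l => (hspec l).2.1
  -- the scale decays geometrically
  have hscale : ∀ l : List ℕ, (scheme e l).2 = (1 / 2 : ℝ) ^ l.length := by
    intro l
    induction l with
    | nil => simp [scheme]
    | cons a l ih => simp [scheme, ih, pow_succ]; ring
  -- vanishing diameter
  have hdiam : CantorScheme.VanishingDiam (A e) := by
    intro x
    have hbound : ∀ n : ℕ,
        EMetric.diam (A e (PiNat.res x (n + 1))) ≤ ENNReal.ofReal ((1 / 2 : ℝ) ^ (n + 1)) := by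
      intro n
      have h1 := ((hspec (PiNat.res x n)).1) (x n)
      rw [PiNat.res_succ]
      refine le_trans h1 ?_
      rw [hscale, PiNat.res_length, pow_succ]
      apply le_of_eq
      congr 1
      ring
    have h0 : Filter.Tendsto (fun n : ℕ => ENNReal.ofReal ((1 / 2 : ℝ) ^ n))
        Filter.atTop (nhds 0) := by
      rw [show (0 : ENNReal) = ENNReal.ofReal 0 by simp]
      apply ENNReal.tendsto_ofReal
      exact tendsto_pow_atTop_nhds_zero_of_lt_one (by norm_num) (by norm_num)
    apply tendsto_of_tendsto_of_tendsto_of_le_of_le' tendsto_const_nhds h0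
    · exact Filter.Eventually.of_forall fun n => zero_le
    · rw [Filter.eventually_atTop]
      refine ⟨1, fun n hn => ?_⟩
      obtain ⟨m, rfl⟩ := Nat.exists_eq_add_of_le hn
      rw [add_comm]
      exact hbound m
  have hclosanti : CantorScheme.ClosureAntitone (A e) :=
    hanti.closureAntitone fun l => (hinv l).1.isClosed
  have hdom : (CantorScheme.inducedMap (A e)).1 = Set.univ :=
    hclosanti.map_of_vanishingDiam hdiam fun l => (hinv l).2
  -- the induced map as a total function
  set f : (ℕ → ℕ) → X := fun x => (CantorScheme.inducedMap (A e)).2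
    ⟨x, by rw [hdom]; trivial⟩ with hfdef
  have hf_cont : Continuous f :=
    hdiam.map_continuous.comp (Continuous.subtype_mk continuous_id _)
  have hf_mem : ∀ (x : ℕ → ℕ) (n : ℕ), f x ∈ A e (PiNat.res x n) := fun x n =>
    CantorScheme.map_mem _ n
  have hf_inj : Function.Injective f := by
    intro x y hxy
    have := hdisj.map_injective (a₁ := ⟨x, by rw [hdom]; trivial⟩) (a₂ := ⟨y, by rw [hdom]; trivial⟩)
      hxy
    exact congrArg Subtype.val this
  -- the inverse map
  obtain ⟨nxt, hnxt⟩ : ∃ nxt : X → List ℕ → ℕ, ∀ (y : X) (l : List ℕ),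
      y ∈ A e l → y ∈ A e (nxt y l :: l) := by
    have : ∀ (y : X) (l : List ℕ), y ∈ A e l → ∃ a, y ∈ A e (a :: l) := by
      intro y l hy
      rw [← (hspec l).2.2] at hy
      exact Set.mem_iUnion.1 hy
    choose! nxt hnxt using this
    exact ⟨nxt, hnxt⟩
  have hL : ∀ (y : X) (k : ℕ), y ∈ A e (branch nxt y k) := by
    intro y k
    induction k with
    | zero => exact Set.mem_univ y
    | succ k ih => exact hnxt y _ ih
  set G : X → ℕ → ℕ := fun y k => nxt y (branch nxt y k) with hGdef
  have hres : ∀ (y : X) (k : ℕ), PiNat.res (G y) k = branch nxt y k := by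
    intro y k
    induction k with
    | zero => rfl
    | succ k ih => rw [PiNat.res_succ, ih]; rfl
  have hGmem : ∀ (y : X) (k : ℕ), y ∈ A e (PiNat.res (G y) k) := by
    intro y k; rw [hres]; exact hL y k
  -- f is a left inverse of G
  have hpointeq : ∀ (x : ℕ → ℕ) (y : X), (∀ k, y ∈ A e (PiNat.res x k)) → f x = y := by
    intro x y hy
    by_contra hne
    have hd : 0 < dist (f x) y := dist_pos.2 hne
    obtain ⟨n, hn⟩ := hdiam.dist_lt _ hd x
    exact absurd (hn _ (hf_mem x n) _ (hy n)) (lt_irrefl _)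
  have hGf : ∀ y : X, f (G y) = y := fun y => hpointeq _ _ (hGmem y)
  have hfG : ∀ x : ℕ → ℕ, G (f x) = x := fun x => hf_inj (by rw [hGf])
  -- uniqueness of lists of the same length containing a common point
  have hlisteq : ∀ (n : ℕ) (l l' : List ℕ), l.length = n → l'.length = n →
      (A e l ∩ A e l').Nonempty → l = l' := by
    intro n
    induction n with
    | zero =>
      intro l l' hl hl' _
      rw [List.length_eq_zero_iff] at hl hl'
      rw [hl, hl']
    | succ n ih =>
      rintro (_ | ⟨a, t⟩) (_ | ⟨a', t'⟩) hl hl' ⟨y, hy1, hy2⟩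
      · simp at hl
      · simp at hl
      · simp at hl'
      · simp only [List.length_cons, Nat.succ.injEq] at hl hl'
        have ht : t = t' := ih t t' hl hl' ⟨y, hanti t a hy1, hanti t' a' hy2⟩
        subst ht
        by_cases hab : a = a'
        · rw [hab]
        · exact absurd (Set.not_disjoint_iff.2 ⟨y, hy1, hy2⟩) (by
            simpa using hdisj t hab)
  -- continuity of G
  have hG_cont : Continuous G := by
    apply continuous_pi
    intro k
    rw [continuous_discrete_rng]
    intro m
    have : (fun y => G y k) ⁻¹' {m} =
        ⋃ l ∈ {l : List ℕ | l.length = k + 1 ∧ l.headI = m}, A e l := by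
      ext y
      simp only [Set.mem_preimage, Set.mem_singleton_iff, Set.mem_setOf_eq, Set.mem_iUnion]
      constructor
      · intro hy
        refine ⟨PiNat.res (G y) (k + 1), ⟨PiNat.res_length _ _, ?_⟩, hGmem y (k + 1)⟩
        rw [PiNat.res_succ]
        exact hy
      · rintro ⟨l, ⟨hlen, hhead⟩, hyl⟩
        have := hlisteq (k + 1) l (PiNat.res (G y) (k + 1)) hlen (PiNat.res_length _ _)
          ⟨y, hyl, hGmem y (k + 1)⟩
        rw [this, PiNat.res_succ] at hhead
        exact hhead
    rw [this]
    exact isOpen_biUnion fun l _ => (hinv l).1.isOpen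
  exact ⟨{ toFun := G, invFun := f, left_inv := hGf, right_inv := hfG,
           continuous_toFun := hG_cont, continuous_invFun := hf_cont }⟩

end AUproof

theorem stmt_7 {X : Type*} [TopologicalSpace X] [PolishSpace X] [Nonempty X]
    (hzero : TopologicalSpace.IsTopologicalBasis {s : Set X | IsClopen s})
    (hperf : Preperfect (Set.univ : Set X))
    (hnck : ∀ U : Set X, IsOpen U → IsCompact U → U = ∅) :
    Nonempty (X ≃ₜ (ℕ → ℕ)) := by
  letI := TopologicalSpace.upgradeIsCompletelyMetrizable X
  exact AUproof.key hzero hnck
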